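/- Let E_i^* denote the static transitive closure of E_i, i.e., (u, v) ∈ E_i^* if and only if there is a nonempty directed path from u to v all of whose edges lie in E_i. Then for all vertices u, v: there is a non-strict journey from u to v in the evolving graph (E_1, ..., E_k) if and only if there is a strict journey from u to v in the evolving graph (E_1^*, ..., E_k^*). Consequently, the strict transitive closure of (E_1^*, ..., E_k^*) equals the non-strict transitive closure of (E_1, ..., E_k). -/
import Mathlib


/-!
An evolving graph on a finite vertex set `V` is given by edge sets
`E i ⊆ V × V` for time steps `i ∈ {1, ..., k}`.  A strict (resp. non-strict)
journey from `u` to `v` is a directed walk with at least one edge, whose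
edges carry strictly increasing (resp. nondecreasing) time indices in
`{1, ..., k}`.  We encode a walk with `p + 1 ≥ 1` edges by its vertex
sequence `w : Fin (p + 2) → V`.
-/

variable {V : Type*}

/-- There is a strict journey from `u` to `v` in `(E 1, ..., E k)`. -/
def StrictJourney (E : ℕ → Finset (V × V)) (k : ℕ) (u v : V) : Prop :=
  ∃ (p : ℕ) (w : Fin (p + 2) → V) (t : Fin (p + 1) → ℕ),
    StrictMono t ∧ (∀ j, 1 ≤ t j ∧ t j ≤ k) ∧
    w 0 = u ∧ w (Fin.last (p + 1)) = v ∧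
    ∀ j : Fin (p + 1), (w j.castSucc, w j.succ) ∈ E (t j)

/-- There is a non-strict journey from `u` to `v` in `(E 1, ..., E k)`. -/
def NonStrictJourney (E : ℕ → Finset (V × V)) (k : ℕ) (u v : V) : Prop :=
  ∃ (p : ℕ) (w : Fin (p + 2) → V) (t : Fin (p + 1) → ℕ),
    Monotone t ∧ (∀ j, 1 ≤ t j ∧ t j ≤ k) ∧
    w 0 = u ∧ w (Fin.last (p + 1)) = v ∧
    ∀ j : Fin (p + 1), (w j.castSucc, w j.succ) ∈ E (t j)

/-- There is a nonempty directed path (in the classic static sense) from `u`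
to `v` all of whose edges lie in `Ei`. -/
def PathIn (Ei : Finset (V × V)) (u v : V) : Prop :=
  ∃ (p : ℕ) (w : Fin (p + 2) → V),
    w 0 = u ∧ w (Fin.last (p + 1)) = v ∧
    ∀ j : Fin (p + 1), (w j.castSucc, w j.succ) ∈ Ei

open Classical in
/-- The static transitive closure `E_i^*` of `E_i`: `(u, v) ∈ E_i^*` iff
there is a nonempty directed path from `u` to `v` inside `E_i`. -/
noncomputable def staticClosure [Fintype V] (E : ℕ → Finset (V × V)) (i : ℕ) :
    Finset (V × V) :=
  Finset.univ.filter (fun e => PathIn (E i) e.1 e.2)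

section Aux

variable {V : Type*}

lemma mem_staticClosure [Fintype V] {E : ℕ → Finset (V × V)} {i : ℕ} {u v : V} :
    (u, v) ∈ staticClosure E i ↔ PathIn (E i) u v := by
  classical
  simp [staticClosure]

lemma pathIn_single {Ei : Finset (V × V)} {u v : V} (h : (u, v) ∈ Ei) : PathIn Ei u v := by
  refine ⟨0, ![u, v], rfl, rfl, ?_⟩
  intro j
  fin_cases j
  simpa using h

lemma pathIn_snoc {Ei : Finset (V × V)} {u v b : V} (h : PathIn Ei u v)
    (hb : (v, b) ∈ Ei) : PathIn Ei u b := by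
  obtain ⟨p, w, h0, hl, he⟩ := h
  refine ⟨p + 1, Fin.snoc w b, ?_, ?_, ?_⟩
  · have : (0 : Fin (p + 3)) = Fin.castSucc 0 := rfl
    rw [this, Fin.snoc_castSucc]; exact h0
  · simp [Fin.snoc_last]
  · intro j
    refine Fin.lastCases ?_ ?_ j
    · have h1 : (Fin.last (p + 1)).castSucc = Fin.castSucc (Fin.last (p + 1)) := rfl
      have h2 : (Fin.last (p + 1)).succ = Fin.last (p + 2) := Fin.succ_last _
      rw [h1, h2, Fin.snoc_castSucc, Fin.snoc_last, hl]
      exact hb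
    · intro i
      have h2 : (Fin.castSucc i).succ = Fin.castSucc i.succ := Fin.succ_castSucc i
      rw [h2, Fin.snoc_castSucc, Fin.snoc_castSucc]
      exact he i

lemma monotone_snoc {n : ℕ} {t : Fin (n + 1) → ℕ} {m : ℕ}
    (h : Monotone t) (hm : ∀ j, t j ≤ m) : Monotone (Fin.snoc t m) := by
  intro a b hab
  rcases Fin.eq_castSucc_or_eq_last b with ⟨b', rfl⟩ | rfl
  · rcases Fin.eq_castSucc_or_eq_last a with ⟨a', rfl⟩ | rfl
    · rw [Fin.snoc_castSucc, Fin.snoc_castSucc]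
      exact h (Fin.castSucc_le_castSucc_iff.mp hab)
    · exact absurd (lt_of_lt_of_le (Fin.castSucc_lt_last b') hab) (lt_irrefl _)
  · rcases Fin.eq_castSucc_or_eq_last a with ⟨a', rfl⟩ | rfl
    · rw [Fin.snoc_castSucc, Fin.snoc_last]; exact hm a'
    · simp

lemma strictMono_snoc {n : ℕ} {t : Fin (n + 1) → ℕ} {m : ℕ}
    (h : StrictMono t) (hm : ∀ j, t j < m) : StrictMono (Fin.snoc t m) := by
  intro a b hab
  rcases Fin.eq_castSucc_or_eq_last b with ⟨b', rfl⟩ | rfl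
  · rcases Fin.eq_castSucc_or_eq_last a with ⟨a', rfl⟩ | rfl
    · rw [Fin.snoc_castSucc, Fin.snoc_castSucc]
      exact h (Fin.castSucc_lt_castSucc_iff.mp hab)
    · exact absurd (lt_trans (Fin.castSucc_lt_last b') hab) (lt_irrefl _)
  · rcases Fin.eq_castSucc_or_eq_last a with ⟨a', rfl⟩ | rfl
    · rw [Fin.snoc_castSucc, Fin.snoc_last]; exact hm a'
    · exact absurd hab (lt_irrefl _)

/-- Strict journey in `F` with last time exactly `m`. -/
def SJ (F : ℕ → Finset (V × V)) (k : ℕ) (u v : V) (m : ℕ) : Prop :=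
  ∃ (p : ℕ) (w : Fin (p + 2) → V) (t : Fin (p + 1) → ℕ),
    StrictMono t ∧ (∀ j, 1 ≤ t j ∧ t j ≤ k) ∧ t (Fin.last p) = m ∧
    w 0 = u ∧ w (Fin.last (p + 1)) = v ∧
    ∀ j : Fin (p + 1), (w j.castSucc, w j.succ) ∈ F (t j)

/-- Non-strict journey with last time exactly `m`. -/
def NSJ (F : ℕ → Finset (V × V)) (k : ℕ) (u v : V) (m : ℕ) : Prop :=
  ∃ (p : ℕ) (w : Fin (p + 2) → V) (t : Fin (p + 1) → ℕ),
    Monotone t ∧ (∀ j, 1 ≤ t j ∧ t j ≤ k) ∧ t (Fin.last p) = m ∧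
    w 0 = u ∧ w (Fin.last (p + 1)) = v ∧
    ∀ j : Fin (p + 1), (w j.castSucc, w j.succ) ∈ F (t j)

end Aux

section Aux2

variable {V : Type*}

lemma NSJ_snoc {F : ℕ → Finset (V × V)} {k : ℕ} {u a b : V} {m m' : ℕ}
    (h : NSJ F k u a m) (hb : (a, b) ∈ F m') (hm : m ≤ m') (h1 : 1 ≤ m') (hk : m' ≤ k) :
    NSJ F k u b m' := by
  obtain ⟨p, w, t, hmono, hbd, hlast, h0, hl, he⟩ := h
  refine ⟨p + 1, Fin.snoc w b, Fin.snoc t m', ?_, ?_, ?_, ?_, ?_, ?_⟩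
  · exact monotone_snoc hmono
      (fun j => le_trans (le_trans (hmono (Fin.le_last j)) (le_of_eq hlast)) hm)
  · intro j
    rcases Fin.eq_castSucc_or_eq_last j with ⟨i, rfl⟩ | rfl
    · rw [Fin.snoc_castSucc]; exact hbd i
    · rw [Fin.snoc_last]; exact ⟨h1, hk⟩
  · rw [Fin.snoc_last]
  · have : (0 : Fin (p + 3)) = Fin.castSucc 0 := rfl
    rw [this, Fin.snoc_castSucc]; exact h0
  · rw [Fin.snoc_last]
  · intro j
    rcases Fin.eq_castSucc_or_eq_last j with ⟨i, rfl⟩ | rfl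
    · have h2 : (Fin.castSucc i).succ = Fin.castSucc i.succ := Fin.succ_castSucc i
      have h3 : (Fin.castSucc i).castSucc = Fin.castSucc i.castSucc := rfl
      rw [h2, h3, Fin.snoc_castSucc, Fin.snoc_castSucc, Fin.snoc_castSucc]
      exact he i
    · have h2 : (Fin.last (p + 1)).succ = Fin.last (p + 2) := Fin.succ_last _
      have h3 : (Fin.last (p + 1)).castSucc = Fin.castSucc (Fin.last (p + 1)) := rfl
      rw [h2, h3, Fin.snoc_castSucc, Fin.snoc_last, Fin.snoc_last, hl]
      exact hb

lemma SJ_snoc [Fintype V] {E : ℕ → Finset (V × V)} {k : ℕ} {u a b : V} {m m' : ℕ}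
    (h : SJ (staticClosure E) k u a m) (hb : (a, b) ∈ E m') (hm : m ≤ m')
    (h1 : 1 ≤ m') (hk : m' ≤ k) : SJ (staticClosure E) k u b m' := by
  obtain ⟨p, w, t, hst, hbd, hlast, h0, hl, he⟩ := h
  rcases eq_or_lt_of_le hm with rfl | hlt
  · -- merge the new edge into the last closure edge
    refine ⟨p, Function.update w (Fin.last (p + 1)) b, t, hst, hbd, hlast, ?_, ?_, ?_⟩
    · rw [Function.update_of_ne (by simp [Fin.ext_iff]) _ _]; exact h0
    · rw [Function.update_self]
    · intro j
      by_cases hj : j = Fin.last p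
      · subst hj
        rw [Fin.succ_last, Function.update_self,
          Function.update_of_ne (Fin.castSucc_lt_last _).ne]
        have hold := he (Fin.last p)
        rw [Fin.succ_last, hl] at hold
        rw [hlast]
        rw [hlast] at hold
        exact mem_staticClosure.mpr (pathIn_snoc (mem_staticClosure.mp hold) hb)
      · have hsucc : j.succ ≠ Fin.last (p + 1) := by
          intro hcon
          apply hj
          have : j.succ = (Fin.last p).succ := by rw [hcon, Fin.succ_last]
          exact Fin.succ_injective _ this
        rw [Function.update_of_ne hsucc, Function.update_of_ne (Fin.castSucc_lt_last _).ne]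
        exact he j
  · -- append a new strictly later step
    refine ⟨p + 1, Fin.snoc w b, Fin.snoc t m', ?_, ?_, ?_, ?_, ?_, ?_⟩
    · exact strictMono_snoc hst
        (fun j => lt_of_le_of_lt (le_trans (hst.monotone (Fin.le_last j)) (le_of_eq hlast)) hlt)
    · intro j
      rcases Fin.eq_castSucc_or_eq_last j with ⟨i, rfl⟩ | rfl
      · rw [Fin.snoc_castSucc]; exact hbd i
      · rw [Fin.snoc_last]; exact ⟨h1, hk⟩
    · rw [Fin.snoc_last]
    · have : (0 : Fin (p + 3)) = Fin.castSucc 0 := rfl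
      rw [this, Fin.snoc_castSucc]; exact h0
    · rw [Fin.snoc_last]
    · intro j
      rcases Fin.eq_castSucc_or_eq_last j with ⟨i, rfl⟩ | rfl
      · have h2 : (Fin.castSucc i).succ = Fin.castSucc i.succ := Fin.succ_castSucc i
        have h3 : (Fin.castSucc i).castSucc = Fin.castSucc i.castSucc := rfl
        rw [h2, h3, Fin.snoc_castSucc, Fin.snoc_castSucc, Fin.snoc_castSucc]
        exact he i
      · have h2 : (Fin.last (p + 1)).succ = Fin.last (p + 2) := Fin.succ_last _
        have h3 : (Fin.last (p + 1)).castSucc = Fin.castSucc (Fin.last (p + 1)) := rfl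
        rw [h2, h3, Fin.snoc_castSucc, Fin.snoc_last, Fin.snoc_last, hl]
        exact mem_staticClosure.mpr (pathIn_single hb)

lemma path_to_NSJ {E : ℕ → Finset (V × V)} {k m : ℕ} {u v : V}
    (h : PathIn (E m) u v) (h1 : 1 ≤ m) (hk : m ≤ k) : NSJ E k u v m := by
  obtain ⟨p, w, h0, hl, he⟩ := h
  exact ⟨p, w, fun _ => m, monotone_const, fun _ => ⟨h1, hk⟩, rfl, h0, hl, he⟩

lemma NSJ_path_snoc {E : ℕ → Finset (V × V)} {k m m' : ℕ}
    (hm : m ≤ m') (h1 : 1 ≤ m') (hk : m' ≤ k) :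
    ∀ (q : ℕ) (wp : Fin (q + 2) → V) (u : V),
      (∀ j : Fin (q + 1), (wp j.castSucc, wp j.succ) ∈ E m') →
      NSJ E k u (wp 0) m →
      NSJ E k u (wp (Fin.last (q + 1))) m' := by
  intro q
  induction q with
  | zero =>
    intro wp u he h
    exact NSJ_snoc h (he 0) hm h1 hk
  | succ q ih =>
    intro wp u he h
    have hprev : NSJ E k u ((wp ∘ Fin.castSucc) (Fin.last (q + 1))) m' := by
      apply ih (wp ∘ Fin.castSucc) u
      · intro j
        exact he j.castSucc
      · exact h
    exact NSJ_snoc hprev (he (Fin.last (q + 1))) le_rfl h1 hk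

lemma ns_to_sj [Fintype V] {E : ℕ → Finset (V × V)} {k : ℕ} :
    ∀ (p : ℕ) (w : Fin (p + 2) → V) (t : Fin (p + 1) → ℕ),
      Monotone t → (∀ j, 1 ≤ t j ∧ t j ≤ k) →
      (∀ j : Fin (p + 1), (w j.castSucc, w j.succ) ∈ E (t j)) →
      SJ (staticClosure E) k (w 0) (w (Fin.last (p + 1))) (t (Fin.last p)) := by
  intro p
  induction p with
  | zero =>
    intro w t _ hbd he
    exact ⟨0, w, t, (by have : Subsingleton (Fin 1) := inferInstance; exact Subsingleton.strictMono t), hbd, rfl, rfl, rfl, fun j =>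
      mem_staticClosure.mpr (pathIn_single (he j))⟩
  | succ p ih =>
    intro w t hmono hbd he
    have hprev := ih (w ∘ Fin.castSucc) (t ∘ Fin.castSucc)
      (hmono.comp (Fin.strictMono_castSucc).monotone)
      (fun j => hbd _) (fun j => he j.castSucc)
    have hm : t (Fin.castSucc (Fin.last p)) ≤ t (Fin.last (p + 1)) :=
      hmono (Fin.le_last _)
    exact SJ_snoc hprev (he (Fin.last (p + 1))) hm (hbd _).1 (hbd _).2

lemma sj_to_nsj [Fintype V] {E : ℕ → Finset (V × V)} {k : ℕ} :
    ∀ (p : ℕ) (w : Fin (p + 2) → V) (t : Fin (p + 1) → ℕ),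
      StrictMono t → (∀ j, 1 ≤ t j ∧ t j ≤ k) →
      (∀ j : Fin (p + 1), (w j.castSucc, w j.succ) ∈ staticClosure E (t j)) →
      NSJ E k (w 0) (w (Fin.last (p + 1))) (t (Fin.last p)) := by
  intro p
  induction p with
  | zero =>
    intro w t _ hbd he
    exact path_to_NSJ (mem_staticClosure.mp (he 0)) (hbd 0).1 (hbd 0).2
  | succ p ih =>
    intro w t hst hbd he
    have hprev := ih (w ∘ Fin.castSucc) (t ∘ Fin.castSucc)
      (hst.comp Fin.strictMono_castSucc)
      (fun j => hbd _) (fun j => he j.castSucc)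
    obtain ⟨q, wp, hp0, hpl, hpe⟩ := mem_staticClosure.mp (he (Fin.last (p + 1)))
    have hm : t (Fin.castSucc (Fin.last p)) ≤ t (Fin.last (p + 1)) :=
      hst.monotone (Fin.le_last _)
    have hpr2 : NSJ E k (w 0) (wp 0) (t (Fin.castSucc (Fin.last p))) := by
      rw [hp0]; exact hprev
    have h := NSJ_path_snoc hm (hbd (Fin.last (p + 1))).1 (hbd (Fin.last (p + 1))).2
      q wp (w 0) hpe hpr2
    rw [hpl] at h
    exact h

end Aux2

/-- There is a non-strict journey from `u` to `v` in `(E 1, ..., E k)` iff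
there is a strict journey from `u` to `v` in `(E_1^*, ..., E_k^*)`.
Consequently, the strict transitive closure of `(E_1^*, ..., E_k^*)` equals
the non-strict transitive closure of `(E_1, ..., E_k)`. -/
theorem nonStrict_iff_strict_on_closures [Fintype V]
    (k : ℕ) (E : ℕ → Finset (V × V)) :
    (∀ u v : V, NonStrictJourney E k u v ↔ StrictJourney (staticClosure E) k u v) ∧
    {e : V × V | e.1 ≠ e.2 ∧ StrictJourney (staticClosure E) k e.1 e.2} =
      {e : V × V | e.1 ≠ e.2 ∧ NonStrictJourney E k e.1 e.2} := by
  have main : ∀ u v : V, NonStrictJourney E k u v ↔ StrictJourney (staticClosure E) k u v := by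
    intro u v
    constructor
    · rintro ⟨p, w, t, hmono, hbd, h0, hl, he⟩
      subst h0; subst hl
      obtain ⟨p', w', t', hst, hbd', -, h0', hl', he'⟩ := ns_to_sj p w t hmono hbd he
      exact ⟨p', w', t', hst, hbd', h0', hl', he'⟩
    · rintro ⟨p, w, t, hst, hbd, h0, hl, he⟩
      subst h0; subst hl
      obtain ⟨p', w', t', hmono, hbd', -, h0', hl', he'⟩ := sj_to_nsj p w t hst hbd he
      exact ⟨p', w', t', hmono, hbd', h0', hl', he'⟩
  refine ⟨main, ?_⟩
  ext e
  simp only [Set.mem_setOf_eq, main]
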